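/- Let (S₁,S₂,I₁,I₂,R₁,R₂,D₁,D₂) be a solution of the two-group active-population SIRD model on [0,∞) with Nᵢ(t) > 0 for all t ≥ 0, whose initial data satisfy Sᵢ(0), Iᵢ(0), Rᵢ(0), Dᵢ(0) ≥ 0 and Sᵢ(0)+Iᵢ(0)+Rᵢ(0)+Dᵢ(0) = Ñᵢ for i = 1,2. Then for every t ≥ 0 and i = 1,2 one has Sᵢ(t)+Iᵢ(t)+Rᵢ(t)+Dᵢ(t) = Ñᵢ and 0 ≤ Sᵢ(t), Iᵢ(t), Rᵢ(t), Dᵢ(t) ≤ Ñᵢ (positive invariance of the region 𝒟). -/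

import Mathlib

open Filter Set intervalIntegral

private lemma max_sub_max_le (u v : ℝ) : max u 0 - max v 0 ≤ max (u - v) 0 := by
  have h1 : u ≤ max (u - v) 0 + max v 0 := by
    have := le_max_left (u - v) (0:ℝ)
    have := le_max_left v (0:ℝ)
    linarith
  have h2 : (0:ℝ) ≤ max (u - v) 0 + max v 0 := by positivity
  have := max_le h1 h2
  linarith

private lemma nonneg_of_linear_ode (S a : ℝ → ℝ)
    (hS : ∀ t ≥ (0:ℝ), HasDerivAt S (-(a t) * S t) t)
    (ha : ContinuousOn a (Set.Ici 0))
    (h0 : 0 ≤ S 0) : ∀ t ≥ (0:ℝ), 0 ≤ S t := by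
  intro t ht
  have habc : Continuous (fun s => a (max s 0)) := by
    have hm : Continuous (fun s : ℝ => max s 0) := Continuous.max continuous_id (continuous_const : Continuous fun _ : ℝ => (0:ℝ))
    exact ha.comp_continuous hm (fun x => Set.mem_Ici.2 (le_max_right _ _))
  set A : ℝ → ℝ := fun u => ∫ s in (0:ℝ)..u, a (max s 0) with hA
  have hA' : ∀ u : ℝ, HasDerivAt A (a (max u 0)) u := fun u =>
    (habc.integral_hasStrictDerivAt 0 u).hasDerivAt
  have hg' : ∀ u ∈ Set.Ico (0:ℝ) t,
      HasDerivWithinAt (fun u => S u * Real.exp (A u)) 0 (Set.Ici u) u := by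
    intro u hu
    have h1 := (hS u hu.1).mul ((hA' u).exp)
    have h2 : max u 0 = u := max_eq_left hu.1
    rw [h2] at h1
    have h3 : -a u * S u * Real.exp (A u) + S u * (Real.exp (A u) * a u) = 0 := by ring
    rw [h3] at h1
    exact h1.hasDerivWithinAt
  have hgc : ContinuousOn (fun u => S u * Real.exp (A u)) (Set.Icc 0 t) := by
    intro u hu
    exact ((hS u hu.1).continuousAt.mul ((hA' u).exp.continuousAt)).continuousWithinAt
  have hconst := constant_of_has_deriv_right_zero hgc hg' t (Set.right_mem_Icc.2 ht)
  have hA0 : A 0 = 0 := intervalIntegral.integral_same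
  have hgt : S t * Real.exp (A t) = S 0 * Real.exp (A 0) := hconst
  rw [hA0, Real.exp_zero, mul_one] at hgt
  nlinarith [Real.exp_pos (A t)]

private lemma mono_of_deriv_nonneg (f g : ℝ → ℝ)
    (hf : ∀ t ≥ (0:ℝ), HasDerivAt f (g t) t) (hg : ∀ t ≥ (0:ℝ), 0 ≤ g t) :
    ∀ t ≥ (0:ℝ), f 0 ≤ f t := by
  intro t ht
  have hmono : MonotoneOn f (Set.Ici (0:ℝ)) := by
    apply monotoneOn_of_deriv_nonneg (convex_Ici 0)
    · exact fun x hx => (hf x hx).continuousAt.continuousWithinAt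
    · intro x hx
      rw [interior_Ici] at hx
      exact (hf x (le_of_lt hx)).differentiableAt.differentiableWithinAt
    · intro x hx
      rw [interior_Ici] at hx
      rw [(hf x (le_of_lt hx)).deriv]
      exact hg x (le_of_lt hx)
  exact hmono Set.self_mem_Ici ht ht

private lemma slope_key (I J : ℝ → ℝ) (p q c L x ε' F : ℝ)
    (hd : HasDerivAt I (p * I x + q * J x - c * I x) x)
    (hp0 : 0 ≤ p) (hpL : p ≤ L) (hq0 : 0 ≤ q) (hqL : q ≤ L) (hc : 0 ≤ c)
    (hε' : 0 < ε')
    (hF : max (-I x) 0 + max (-J x) 0 ≤ F) (hF0 : 0 ≤ F) (hL0 : 0 ≤ L) :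
    ∀ᶠ z in nhdsWithin x (Set.Ioi x),
      (z - x)⁻¹ * (max (-I z) 0 - max (-I x) 0) ≤ L * F + ε' := by
  have hLF : 0 ≤ L * F := mul_nonneg hL0 hF0
  rcases le_or_gt (I x) 0 with hIx | hIx
  · have hdneg : -(p * I x + q * J x - c * I x) ≤ L * F := by
      linarith [mul_nonneg hL0 (by linarith [le_max_left (-I x) (0:ℝ)] :
                  (0:ℝ) ≤ max (-I x) 0 + I x),
                mul_nonneg hq0 (by linarith [le_max_left (-J x) (0:ℝ)] :
                  (0:ℝ) ≤ max (-J x) 0 + J x),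
                mul_nonneg (sub_nonneg.2 hqL) (le_max_right (-J x) (0:ℝ)),
                mul_nonneg hc (neg_nonneg.2 hIx),
                mul_nonneg (sub_nonneg.2 hpL) (neg_nonneg.2 hIx),
                mul_nonneg hL0 (sub_nonneg.2 hF)]
    have hsl : Tendsto (fun z => (z - x)⁻¹ * (I z - I x)) (nhdsWithin x (Set.Ioi x))
        (nhds (p * I x + q * J x - c * I x)) := by
      have h := hasDerivAt_iff_tendsto_slope.1 hd
      have h2 := h.mono_left (nhdsWithin_mono x
        (fun z hz => Set.mem_compl_singleton_iff.2 (ne_of_gt hz)))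
      refine h2.congr fun z => ?_
      rw [slope_def_field, div_eq_inv_mul]
    have hev1 : ∀ᶠ z in nhdsWithin x (Set.Ioi x),
        p * I x + q * J x - c * I x - ε' < (z - x)⁻¹ * (I z - I x) :=
      hsl.eventually (eventually_gt_nhds (by linarith))
    filter_upwards [hev1, self_mem_nhdsWithin] with z hz hzx
    have hzx' : (0:ℝ) < z - x := sub_pos.2 hzx
    have hmax : max (-I z) 0 - max (-I x) 0 ≤ max (-(I z - I x)) 0 := by
      have h := max_sub_max_le (-I z) (-I x)
      rw [show -I z - -I x = -(I z - I x) by ring] at h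
      exact h
    calc (z - x)⁻¹ * (max (-I z) 0 - max (-I x) 0)
        ≤ (z - x)⁻¹ * max (-(I z - I x)) 0 :=
          mul_le_mul_of_nonneg_left hmax (inv_nonneg.2 hzx'.le)
      _ = max ((z - x)⁻¹ * -(I z - I x)) ((z - x)⁻¹ * 0) :=
          mul_max_of_nonneg _ _ (inv_nonneg.2 hzx'.le)
      _ ≤ L * F + ε' := by
          rw [mul_zero]
          apply max_le _ (by linarith)
          have he : (z - x)⁻¹ * -(I z - I x) = -((z - x)⁻¹ * (I z - I x)) := by ring
          rw [he]
          linarith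
  · have hev : ∀ᶠ z in nhds x, 0 < I z :=
      hd.continuousAt.eventually (eventually_gt_nhds hIx)
    filter_upwards [hev.filter_mono nhdsWithin_le_nhds] with z hz
    have h1 : max (-I z) 0 = 0 := max_eq_right (by linarith)
    have h2 : max (-I x) 0 = 0 := max_eq_right (by linarith)
    rw [h1, h2, sub_zero, mul_zero]
    linarith

theorem stmt_0
    (β11 β12 β21 β22 γ1 γ2 μ1 μ2 : ℝ)
    (hβ11 : 0 < β11) (hβ12 : 0 < β12) (hβ21 : 0 < β21) (hβ22 : 0 < β22)
    (hγ1 : 0 < γ1) (hγ2 : 0 < γ2) (hμ1 : 0 < μ1) (hμ2 : 0 < μ2)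
    (S1 S2 I1 I2 R1 R2 D1 D2 N1 N2 : ℝ → ℝ)
    (hN1 : ∀ t, N1 t = S1 t + I1 t + R1 t)
    (hN2 : ∀ t, N2 t = S2 t + I2 t + R2 t)
    (hS1' : ∀ t ≥ (0:ℝ), HasDerivAt S1 (-(β11 * I1 t / N1 t + β12 * I2 t / N2 t) * S1 t) t)
    (hS2' : ∀ t ≥ (0:ℝ), HasDerivAt S2 (-(β21 * I1 t / N1 t + β22 * I2 t / N2 t) * S2 t) t)
    (hI1' : ∀ t ≥ (0:ℝ), HasDerivAt I1 ((β11 * I1 t / N1 t + β12 * I2 t / N2 t) * S1 t - (γ1 + μ1) * I1 t) t)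
    (hI2' : ∀ t ≥ (0:ℝ), HasDerivAt I2 ((β21 * I1 t / N1 t + β22 * I2 t / N2 t) * S2 t - (γ2 + μ2) * I2 t) t)
    (hR1' : ∀ t ≥ (0:ℝ), HasDerivAt R1 (γ1 * I1 t) t)
    (hR2' : ∀ t ≥ (0:ℝ), HasDerivAt R2 (γ2 * I2 t) t)
    (hD1' : ∀ t ≥ (0:ℝ), HasDerivAt D1 (μ1 * I1 t) t)
    (hD2' : ∀ t ≥ (0:ℝ), HasDerivAt D2 (μ2 * I2 t) t)
    (hN1pos : ∀ t ≥ (0:ℝ), 0 < N1 t)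
    (hN2pos : ∀ t ≥ (0:ℝ), 0 < N2 t)
    (Ntil1 Ntil2 : ℝ) (hNtil1 : 0 < Ntil1) (hNtil2 : 0 < Ntil2)
    (h0S1 : 0 ≤ S1 0) (h0I1 : 0 ≤ I1 0) (h0R1 : 0 ≤ R1 0) (h0D1 : 0 ≤ D1 0)
    (h0S2 : 0 ≤ S2 0) (h0I2 : 0 ≤ I2 0) (h0R2 : 0 ≤ R2 0) (h0D2 : 0 ≤ D2 0)
    (hsum1 : S1 0 + I1 0 + R1 0 + D1 0 = Ntil1)
    (hsum2 : S2 0 + I2 0 + R2 0 + D2 0 = Ntil2) :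
    ∀ t ≥ (0:ℝ),
      (S1 t + I1 t + R1 t + D1 t = Ntil1 ∧ S2 t + I2 t + R2 t + D2 t = Ntil2) ∧
      ((0 ≤ S1 t ∧ S1 t ≤ Ntil1) ∧ (0 ≤ I1 t ∧ I1 t ≤ Ntil1) ∧
       (0 ≤ R1 t ∧ R1 t ≤ Ntil1) ∧ (0 ≤ D1 t ∧ D1 t ≤ Ntil1)) ∧
      ((0 ≤ S2 t ∧ S2 t ≤ Ntil2) ∧ (0 ≤ I2 t ∧ I2 t ≤ Ntil2) ∧
       (0 ≤ R2 t ∧ R2 t ≤ Ntil2) ∧ (0 ≤ D2 t ∧ D2 t ≤ Ntil2)) := by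
  -- continuity of basic functions at nonnegative times
  have hcS1 : ∀ t ≥ (0:ℝ), ContinuousAt S1 t := fun t ht => (hS1' t ht).continuousAt
  have hcS2 : ∀ t ≥ (0:ℝ), ContinuousAt S2 t := fun t ht => (hS2' t ht).continuousAt
  have hcI1 : ∀ t ≥ (0:ℝ), ContinuousAt I1 t := fun t ht => (hI1' t ht).continuousAt
  have hcI2 : ∀ t ≥ (0:ℝ), ContinuousAt I2 t := fun t ht => (hI2' t ht).continuousAt
  have hcR1 : ∀ t ≥ (0:ℝ), ContinuousAt R1 t := fun t ht => (hR1' t ht).continuousAt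
  have hcR2 : ∀ t ≥ (0:ℝ), ContinuousAt R2 t := fun t ht => (hR2' t ht).continuousAt
  have hcN1 : ∀ t ≥ (0:ℝ), ContinuousAt N1 t := by
    intro t ht
    have h : N1 = fun u => S1 u + I1 u + R1 u := funext hN1
    rw [h]
    exact ((hcS1 t ht).add (hcI1 t ht)).add (hcR1 t ht)
  have hcN2 : ∀ t ≥ (0:ℝ), ContinuousAt N2 t := by
    intro t ht
    have h : N2 = fun u => S2 u + I2 u + R2 u := funext hN2
    rw [h]
    exact ((hcS2 t ht).add (hcI2 t ht)).add (hcR2 t ht)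
  -- conservation of total population
  have hW1 : ∀ t ≥ (0:ℝ), S1 t + I1 t + R1 t + D1 t = Ntil1 := by
    intro t ht
    have hderiv : ∀ x ∈ Set.Ico (0:ℝ) t,
        HasDerivWithinAt (fun u => S1 u + I1 u + R1 u + D1 u) 0 (Set.Ici x) x := by
      intro x hx
      have h := (((hS1' x hx.1).add (hI1' x hx.1)).add (hR1' x hx.1)).add (hD1' x hx.1)
      have he : -(β11 * I1 x / N1 x + β12 * I2 x / N2 x) * S1 x +
          ((β11 * I1 x / N1 x + β12 * I2 x / N2 x) * S1 x - (γ1 + μ1) * I1 x) +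
          γ1 * I1 x + μ1 * I1 x = 0 := by ring
      rw [he] at h
      exact h.hasDerivWithinAt
    have hcont : ContinuousOn (fun u => S1 u + I1 u + R1 u + D1 u) (Set.Icc 0 t) := by
      intro x hx
      exact ((((hS1' x hx.1).continuousAt.add (hI1' x hx.1).continuousAt).add
        (hR1' x hx.1).continuousAt).add (hD1' x hx.1).continuousAt).continuousWithinAt
    have h2 : S1 t + I1 t + R1 t + D1 t = S1 0 + I1 0 + R1 0 + D1 0 :=
      constant_of_has_deriv_right_zero hcont hderiv t (Set.right_mem_Icc.2 ht)
    linarith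
  have hW2 : ∀ t ≥ (0:ℝ), S2 t + I2 t + R2 t + D2 t = Ntil2 := by
    intro t ht
    have hderiv : ∀ x ∈ Set.Ico (0:ℝ) t,
        HasDerivWithinAt (fun u => S2 u + I2 u + R2 u + D2 u) 0 (Set.Ici x) x := by
      intro x hx
      have h := (((hS2' x hx.1).add (hI2' x hx.1)).add (hR2' x hx.1)).add (hD2' x hx.1)
      have he : -(β21 * I1 x / N1 x + β22 * I2 x / N2 x) * S2 x +
          ((β21 * I1 x / N1 x + β22 * I2 x / N2 x) * S2 x - (γ2 + μ2) * I2 x) +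
          γ2 * I2 x + μ2 * I2 x = 0 := by ring
      rw [he] at h
      exact h.hasDerivWithinAt
    have hcont : ContinuousOn (fun u => S2 u + I2 u + R2 u + D2 u) (Set.Icc 0 t) := by
      intro x hx
      exact ((((hS2' x hx.1).continuousAt.add (hI2' x hx.1).continuousAt).add
        (hR2' x hx.1).continuousAt).add (hD2' x hx.1).continuousAt).continuousWithinAt
    have h2 : S2 t + I2 t + R2 t + D2 t = S2 0 + I2 0 + R2 0 + D2 0 :=
      constant_of_has_deriv_right_zero hcont hderiv t (Set.right_mem_Icc.2 ht)
    linarith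
  -- nonnegativity of S
  have hS1nn : ∀ t ≥ (0:ℝ), 0 ≤ S1 t := by
    apply nonneg_of_linear_ode S1 (fun u => β11 * I1 u / N1 u + β12 * I2 u / N2 u) hS1' _ h0S1
    intro x hx
    exact (((continuousAt_const.mul (hcI1 x hx)).div (hcN1 x hx)
      (ne_of_gt (hN1pos x hx))).add ((continuousAt_const.mul (hcI2 x hx)).div (hcN2 x hx)
      (ne_of_gt (hN2pos x hx)))).continuousWithinAt
  have hS2nn : ∀ t ≥ (0:ℝ), 0 ≤ S2 t := by
    apply nonneg_of_linear_ode S2 (fun u => β21 * I1 u / N1 u + β22 * I2 u / N2 u) hS2' _ h0S2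
    intro x hx
    exact (((continuousAt_const.mul (hcI1 x hx)).div (hcN1 x hx)
      (ne_of_gt (hN1pos x hx))).add ((continuousAt_const.mul (hcI2 x hx)).div (hcN2 x hx)
      (ne_of_gt (hN2pos x hx)))).continuousWithinAt
  -- nonnegativity of I via Grönwall
  have hInn : ∀ T ≥ (0:ℝ), 0 ≤ I1 T ∧ 0 ≤ I2 T := by
    intro T hT
    obtain ⟨C, hC⟩ := isCompact_Icc.exists_bound_of_continuousOn
      (show ContinuousOn (fun x => β11 * S1 x / N1 x + β12 * S1 x / N2 x +
          β21 * S2 x / N1 x + β22 * S2 x / N2 x) (Set.Icc 0 T) by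
        intro x hx
        have hx0 := hx.1
        have c1 : ContinuousAt (fun x => β11 * S1 x / N1 x) x :=
          (continuousAt_const.mul (hcS1 x hx0)).div (hcN1 x hx0) (ne_of_gt (hN1pos x hx0))
        have c2 : ContinuousAt (fun x => β12 * S1 x / N2 x) x :=
          (continuousAt_const.mul (hcS1 x hx0)).div (hcN2 x hx0) (ne_of_gt (hN2pos x hx0))
        have c3 : ContinuousAt (fun x => β21 * S2 x / N1 x) x :=
          (continuousAt_const.mul (hcS2 x hx0)).div (hcN1 x hx0) (ne_of_gt (hN1pos x hx0))
        have c4 : ContinuousAt (fun x => β22 * S2 x / N2 x) x :=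
          (continuousAt_const.mul (hcS2 x hx0)).div (hcN2 x hx0) (ne_of_gt (hN2pos x hx0))
        exact ((((c1.add c2).add c3).add c4).continuousWithinAt))
    obtain ⟨L, hL0, hCL⟩ : ∃ L : ℝ, 0 ≤ L ∧ C ≤ L :=
      ⟨max C 0, le_max_right _ _, le_max_left _ _⟩
    have hterm : ∀ x ∈ Set.Icc (0:ℝ) T,
        (0 ≤ β11 * S1 x / N1 x ∧ β11 * S1 x / N1 x ≤ L) ∧
        (0 ≤ β12 * S1 x / N2 x ∧ β12 * S1 x / N2 x ≤ L) ∧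
        (0 ≤ β21 * S2 x / N1 x ∧ β21 * S2 x / N1 x ≤ L) ∧
        (0 ≤ β22 * S2 x / N2 x ∧ β22 * S2 x / N2 x ≤ L) := by
      intro x hx
      have hx0 := hx.1
      have t1 : 0 ≤ β11 * S1 x / N1 x :=
        div_nonneg (mul_nonneg hβ11.le (hS1nn x hx0)) (hN1pos x hx0).le
      have t2 : 0 ≤ β12 * S1 x / N2 x :=
        div_nonneg (mul_nonneg hβ12.le (hS1nn x hx0)) (hN2pos x hx0).le
      have t3 : 0 ≤ β21 * S2 x / N1 x :=
        div_nonneg (mul_nonneg hβ21.le (hS2nn x hx0)) (hN1pos x hx0).le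
      have t4 : 0 ≤ β22 * S2 x / N2 x :=
        div_nonneg (mul_nonneg hβ22.le (hS2nn x hx0)) (hN2pos x hx0).le
      have hCx := hC x hx
      rw [Real.norm_eq_abs] at hCx
      have hsum : β11 * S1 x / N1 x + β12 * S1 x / N2 x +
          β21 * S2 x / N1 x + β22 * S2 x / N2 x ≤ L :=
        (le_abs_self _).trans (hCx.trans hCL)
      exact ⟨⟨t1, by linarith⟩, ⟨t2, by linarith⟩, ⟨t3, by linarith⟩, ⟨t4, by linarith⟩⟩
    set f : ℝ → ℝ := fun x => max (-I1 x) 0 + max (-I2 x) 0 with hfdef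
    have hfnn : ∀ x, 0 ≤ f x := fun x => add_nonneg (le_max_right _ _) (le_max_right _ _)
    have hfc : ContinuousOn f (Set.Icc 0 T) := by
      intro x hx
      have c1 : ContinuousAt (fun x => max (-I1 x) 0) x :=
        ContinuousAt.sup (hcI1 x hx.1).neg continuousAt_const
      have c2 : ContinuousAt (fun x => max (-I2 x) 0) x :=
        ContinuousAt.sup (hcI2 x hx.1).neg continuousAt_const
      exact (c1.add c2).continuousWithinAt
    have hf0 : f 0 ≤ 0 := by
      have h1 : max (-I1 0) 0 = 0 := max_eq_right (by linarith)
      have h2 : max (-I2 0) 0 = 0 := max_eq_right (by linarith)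
      simp only [hfdef, h1, h2]
      norm_num
    clear_value f
    have key : ∀ x ∈ Set.Ico (0:ℝ) T, ∀ r, (fun x => 2 * L * f x) x < r →
        ∃ᶠ z in nhdsWithin x (Set.Ioi x), (z - x)⁻¹ * (f z - f x) < r := by
      intro x hx r hr
      simp only at hr
      have hε'pos : 0 < (r - 2 * L * f x) / 4 := by linarith
      set ε' : ℝ := (r - 2 * L * f x) / 4 with hε'def
      have hxT : x ∈ Set.Icc (0:ℝ) T := ⟨hx.1, hx.2.le⟩
      obtain ⟨⟨hp1, hp1L⟩, ⟨hq1, hq1L⟩, ⟨hp2, hp2L⟩, ⟨hq2, hq2L⟩⟩ := hterm x hxT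
      have hd1 : HasDerivAt I1 ((β11 * S1 x / N1 x) * I1 x + (β12 * S1 x / N2 x) * I2 x
          - (γ1 + μ1) * I1 x) x := by
        have h := hI1' x hx.1
        have he : (β11 * I1 x / N1 x + β12 * I2 x / N2 x) * S1 x - (γ1 + μ1) * I1 x
            = (β11 * S1 x / N1 x) * I1 x + (β12 * S1 x / N2 x) * I2 x - (γ1 + μ1) * I1 x := by
          ring
        rw [he] at h
        exact h
      have hd2 : HasDerivAt I2 ((β22 * S2 x / N2 x) * I2 x + (β21 * S2 x / N1 x) * I1 x
          - (γ2 + μ2) * I2 x) x := by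
        have h := hI2' x hx.1
        have he : (β21 * I1 x / N1 x + β22 * I2 x / N2 x) * S2 x - (γ2 + μ2) * I2 x
            = (β22 * S2 x / N2 x) * I2 x + (β21 * S2 x / N1 x) * I1 x - (γ2 + μ2) * I2 x := by
          ring
        rw [he] at h
        exact h
      have h1 := slope_key I1 I2 (β11 * S1 x / N1 x) (β12 * S1 x / N2 x) (γ1 + μ1) L x ε'
        (f x) hd1 hp1 hp1L hq1 hq1L (by linarith) hε'pos (le_of_eq (by rw [hfdef])) (hfnn x) hL0
      have h2 := slope_key I2 I1 (β22 * S2 x / N2 x) (β21 * S2 x / N1 x) (γ2 + μ2) L x ε'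
        (f x) hd2 hq2 hq2L hp2 hp2L (by linarith) hε'pos (le_of_eq (by rw [hfdef]; exact add_comm _ _)) (hfnn x) hL0
      apply Filter.Eventually.frequently
      filter_upwards [h1, h2] with z hz1 hz2
      have he : (z - x)⁻¹ * (f z - f x) =
          (z - x)⁻¹ * (max (-I1 z) 0 - max (-I1 x) 0) +
          (z - x)⁻¹ * (max (-I2 z) 0 - max (-I2 x) 0) := by
        simp only [hfdef]
        ring
      rw [he]
      linarith
    have hbound : ∀ x ∈ Set.Ico (0:ℝ) T, (fun x => 2 * L * f x) x ≤ 2 * L * f x + 0 := by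
      intro x hx
      simp
    have hg := le_gronwallBound_of_liminf_deriv_right_le hfc key hf0 hbound T
      (Set.right_mem_Icc.2 hT)
    rw [gronwallBound_ε0_δ0] at hg
    have hfT : f T = 0 := le_antisymm hg (hfnn T)
    have e1 : -I1 T ≤ max (-I1 T) 0 := le_max_left _ _
    have e2 : -I2 T ≤ max (-I2 T) 0 := le_max_left _ _
    have e3 : 0 ≤ max (-I1 T) 0 := le_max_right _ _
    have e4 : 0 ≤ max (-I2 T) 0 := le_max_right _ _
    have hft : max (-I1 T) 0 + max (-I2 T) 0 = 0 := by rw [hfdef] at hfT; exact hfT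
    constructor <;> linarith
  have hI1nn : ∀ t ≥ (0:ℝ), 0 ≤ I1 t := fun t ht => (hInn t ht).1
  have hI2nn : ∀ t ≥ (0:ℝ), 0 ≤ I2 t := fun t ht => (hInn t ht).2
  -- R and D are nondecreasing
  have hR1nn : ∀ t ≥ (0:ℝ), 0 ≤ R1 t := by
    intro t ht
    have := mono_of_deriv_nonneg R1 (fun u => γ1 * I1 u) hR1'
      (fun u hu => mul_nonneg hγ1.le (hI1nn u hu)) t ht
    linarith
  have hR2nn : ∀ t ≥ (0:ℝ), 0 ≤ R2 t := by
    intro t ht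
    have := mono_of_deriv_nonneg R2 (fun u => γ2 * I2 u) hR2'
      (fun u hu => mul_nonneg hγ2.le (hI2nn u hu)) t ht
    linarith
  have hD1nn : ∀ t ≥ (0:ℝ), 0 ≤ D1 t := by
    intro t ht
    have := mono_of_deriv_nonneg D1 (fun u => μ1 * I1 u) hD1'
      (fun u hu => mul_nonneg hμ1.le (hI1nn u hu)) t ht
    linarith
  have hD2nn : ∀ t ≥ (0:ℝ), 0 ≤ D2 t := by
    intro t ht
    have := mono_of_deriv_nonneg D2 (fun u => μ2 * I2 u) hD2'
      (fun u hu => mul_nonneg hμ2.le (hI2nn u hu)) t ht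
    linarith
  intro t ht
  have w1 := hW1 t ht
  have w2 := hW2 t ht
  have s1 := hS1nn t ht
  have s2 := hS2nn t ht
  have i1 := hI1nn t ht
  have i2 := hI2nn t ht
  have r1 := hR1nn t ht
  have r2 := hR2nn t ht
  have d1 := hD1nn t ht
  have d2 := hD2nn t ht
  exact ⟨⟨w1, w2⟩,
    ⟨⟨s1, by linarith⟩, ⟨i1, by linarith⟩, ⟨r1, by linarith⟩, ⟨d1, by linarith⟩⟩,
    ⟨⟨s2, by linarith⟩, ⟨i2, by linarith⟩, ⟨r2, by linarith⟩, ⟨d2, by linarith⟩⟩⟩
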